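/- arXiv:1609.02901 — 2 statements merged into one kernel-verified Lean document; each statement's English description precedes it below -/
import Mathlib

section
/- Let K be a convex body in ℝ^{d+1} such that for every boundary point x there is a ball of radius r > 0 contained in K tangent to ∂K at x, and a ball of radius R ≥ r containing K tangent to ∂K at x. Let ℓ be a line through a boundary point q making angle θ ∈ (0,π/2] with the supporting hyperplane at q. Then the chord length Δ = length(ℓ ∩ K) satisfies r·sin(θ) ≤ Δ ≤ 2R·sin(θ). -/
open Metric Real

/-- Let `K` be a convex body in ℝ^{d+1} satisfying rolling-ball conditions: at every
boundary point `x` there is a tangent ball of radius `r` inside `K` and a tangent ball of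
radius `R` containing `K`.  A line through a boundary point `q`, with unit direction `v`
making angle `θ ∈ (0, π/2]` with the supporting hyperplane at `q` (whose inward unit
normal is `u`), cuts a chord of length `Δ` with `r·sin θ ≤ Δ ≤ 2R·sin θ`. -/
theorem stmt6 {d : ℕ}
    (K : Set (EuclideanSpace ℝ (Fin (d + 1))))
    (hKconv : Convex ℝ K) (hKcomp : IsCompact K) (hKint : (interior K).Nonempty)
    (r R : ℝ) (hr : 0 < r) (hrR : r ≤ R)
    (hroll : ∀ x ∈ frontier K, ∃ u : EuclideanSpace ℝ (Fin (d + 1)), ‖u‖ = 1 ∧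
      closedBall (x + r • u) r ⊆ K ∧ K ⊆ closedBall (x + R • u) R)
    (q : EuclideanSpace ℝ (Fin (d + 1))) (hq : q ∈ frontier K)
    (u : EuclideanSpace ℝ (Fin (d + 1))) (hu : ‖u‖ = 1)
    (huin : closedBall (q + r • u) r ⊆ K) (huout : K ⊆ closedBall (q + R • u) R)
    (v : EuclideanSpace ℝ (Fin (d + 1))) (hv : ‖v‖ = 1)
    (θ : ℝ) (hθ0 : 0 < θ) (hθ1 : θ ≤ π / 2)
    (hangle : inner ℝ v u = Real.sin θ)
    (Δ : ℝ) (hΔ : Δ = Metric.diam ((Set.range fun t : ℝ => q + t • v) ∩ K)) :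
    r * Real.sin θ ≤ Δ ∧ Δ ≤ 2 * R * Real.sin θ := by
  have hsθ : 0 < Real.sin θ :=
    Real.sin_pos_of_pos_of_lt_pi hθ0 (lt_of_le_of_lt hθ1 (by linarith [Real.pi_pos]))
  have hsθ1 : Real.sin θ ≤ 1 := Real.sin_le_one θ
  have hqK : q ∈ K := hKcomp.isClosed.frontier_subset hq
  -- key norm computation
  have key : ∀ t ρ : ℝ, ‖t • v - ρ • u‖ ^ 2 = t ^ 2 - 2 * t * ρ * Real.sin θ + ρ ^ 2 := by
    intro t ρ
    rw [norm_sub_sq_real, real_inner_smul_left, real_inner_smul_right, hangle,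
      norm_smul, norm_smul, hu, hv, Real.norm_eq_abs, Real.norm_eq_abs]
    rw [mul_one, mul_one, sq_abs, sq_abs]
    ring
  have hdistc : ∀ t ρ : ℝ, dist (q + t • v) (q + ρ • u) = ‖t • v - ρ • u‖ := by
    intro t ρ
    rw [dist_eq_norm]
    congr 1
    abel
  constructor
  · -- lower bound
    set t0 := r * Real.sin θ with ht0
    have hmem2 : q + t0 • v ∈ (Set.range fun t : ℝ => q + t • v) ∩ K := by
      refine ⟨⟨t0, rfl⟩, huin ?_⟩
      rw [mem_closedBall, hdistc]
      have h2 : ‖t0 • v - r • u‖ ^ 2 ≤ r ^ 2 := by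
        rw [key, ht0]; nlinarith [sq_nonneg (r * Real.sin θ)]
      nlinarith [norm_nonneg (t0 • v - r • u)]
    have hmem1 : q ∈ (Set.range fun t : ℝ => q + t • v) ∩ K := ⟨⟨0, by simp⟩, hqK⟩
    have hbdd : Bornology.IsBounded ((Set.range fun t : ℝ => q + t • v) ∩ K) :=
      hKcomp.isBounded.subset Set.inter_subset_right
    have := Metric.dist_le_diam_of_mem hbdd hmem1 hmem2
    have hd : dist q (q + t0 • v) = t0 := by
      rw [dist_self_add_right, norm_smul, hv, Real.norm_eq_abs, mul_one,
        abs_of_pos (by positivity)]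
    rw [hΔ]
    linarith [hd ▸ this]
  · -- upper bound
    rw [hΔ]
    apply Metric.diam_le_of_forall_dist_le (by nlinarith)
    have bound : ∀ s : ℝ, q + s • v ∈ K → 0 ≤ s ∧ s ≤ 2 * R * Real.sin θ := by
      intro s hs
      have := huout hs
      rw [mem_closedBall, hdistc] at this
      have h2 : ‖s • v - R • u‖ ^ 2 ≤ R ^ 2 := by
        have := norm_nonneg (s • v - R • u); nlinarith
      rw [key] at h2
      constructor <;> nlinarith [mul_pos (lt_of_lt_of_le hr hrR) hsθ, sq_nonneg s]
    rintro x ⟨⟨s, rfl⟩, hxK⟩ y ⟨⟨t, rfl⟩, hyK⟩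
    simp only at hxK hyK ⊢
    obtain ⟨hs0, hs1⟩ := bound s hxK
    obtain ⟨ht0, ht1⟩ := bound t hyK
    have hd : dist (q + s • v) (q + t • v) = |s - t| := by
      rw [dist_eq_norm]
      have he : (q + s • v) - (q + t • v) = (s - t) • v := by
        rw [sub_smul]; abel
      rw [he, norm_smul, hv, mul_one, Real.norm_eq_abs]
    rw [hd, abs_le]
    constructor <;> linarith
end

section
/- Let v, w be unit vectors in ℝ^n and let P be a linear subspace with orthogonal projection 𝒫. Suppose 𝒫^⊥ v = 0 (i.e., v ∈ P) and the projection 𝒫w is a nonnegative scalar multiple of v. Then ‖v − w‖ ≤ 2‖𝒫^⊥ w‖. -/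
open RealInnerProductSpace


/-- If `v, w` are unit vectors in ℝⁿ, `v` lies in a subspace `P`, and the orthogonal
projection of `w` onto `P` is a nonnegative multiple of `v`, then
`‖v − w‖ ≤ 2‖𝒫^⊥ w‖`, where `𝒫^⊥ w = w − 𝒫 w` is the component of `w` orthogonal
to `P`. -/
theorem stmt14 {n : ℕ}
    (P : Submodule ℝ (EuclideanSpace ℝ (Fin n)))
    (v w : EuclideanSpace ℝ (Fin n)) (hv : ‖v‖ = 1) (hw : ‖w‖ = 1)
    (hvP : v ∈ P)
    (l : ℝ) (hl : 0 ≤ l)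
    (hproj : (P.orthogonalProjection w : EuclideanSpace ℝ (Fin n)) = l • v) :
    ‖v - w‖ ≤ 2 * ‖w - (P.orthogonalProjection w : EuclideanSpace ℝ (Fin n))‖ := by
  set q : EuclideanSpace ℝ (Fin n) :=
    w - (P.orthogonalProjection w : EuclideanSpace ℝ (Fin n)) with hqdef
  have hqmem : q ∈ Pᗮ := Submodule.sub_starProjection_mem_orthogonal (K := P) w
  have hvq : (inner ℝ v q : ℝ) = 0 := hqmem v hvP
  have hwdecomp : w = l • v + q := by
    rw [hqdef, hproj]; abel
  have h2 : 1 = l ^ 2 + ‖q‖ ^ 2 := by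
    have := norm_add_sq_real (l • v) q
    rw [← hwdecomp, hw] at this
    rw [norm_smul, real_inner_smul_left, hvq, hv] at this
    simp at this
    nlinarith [this, abs_eq_self.mpr hl]
  have h1 : ‖v - w‖ ^ 2 = (1 - l) ^ 2 + ‖q‖ ^ 2 := by
    have hvw : v - w = (1 - l) • v - q := by
      rw [hwdecomp, sub_smul, one_smul]; abel
    rw [hvw, norm_sub_sq_real, norm_smul, real_inner_smul_left, hvq, hv]
    simp [mul_pow, sq_abs]
  have hl1 : l ≤ 1 := by nlinarith [sq_nonneg ‖q‖]
  nlinarith [norm_nonneg (v - w), norm_nonneg q, sq_nonneg (‖v - w‖ - 2 * ‖q‖),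
    sq_nonneg (‖v - w‖ + 2 * ‖q‖)]
end
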